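/- Let D be a division ring, k ≥ 1 an integer, and u : ℤ → D a sequence of nonzero elements satisfying, for all n ∈ ℤ, u_{2n+2k+1}·u_{2n} = u_{2n+1}·u_{2n+2k} + 1 and u_{2n+1}·u_{2n+2k+2} = u_{2n+2k+1}·u_{2n+2} + 1. Then for all n ∈ ℤ and all i ∈ ℤ, the element u_n belongs to the subsemiring of D generated by the 2(2k+1) elements u_i, u_i⁻¹, u_{i+1}, u_{i+1}⁻¹, …, u_{i+2k}, u_{i+2k}⁻¹; i.e., u_n is a positive Laurent polynomial in any initial data (u_i, u_{i+1}, …, u_{i+2k}). -/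

import Mathlib

set_option linter.unusedSectionVars false
set_option linter.unusedTactic false
set_option maxHeartbeats 1000000

namespace Stmt18Aux

variable {D : Type*} [DivisionRing D]

private lemma uIdx (u : ℤ → D) {a b : ℤ} (h : a = b) : u a = u b := by rw [h]

private def tau (u : ℤ → D) (j : ℕ) : D :=
  if j % 2 = 0 then (u ((j : ℤ) + 1))⁻¹ * (u (j : ℤ))⁻¹
  else (u (j : ℤ))⁻¹ * (u ((j : ℤ) + 1))⁻¹
private def esum (u : ℤ → D) (b : ℕ) : D := ∑ j ∈ Finset.range b, tau u j
private def zel (k : ℕ) (u : ℤ → D) : D := u (2 * (k : ℤ)) * (u 0)⁻¹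
private def zir (k : ℕ) (u : ℤ → D) : D := u 0 * (u (2 * (k : ℤ)))⁻¹
private def tcons (k : ℕ) (u : ℤ → D) : D :=
  (u 0 + u (4 * (k : ℤ))) * (u (2 * (k : ℤ)))⁻¹
private def GG (k : ℕ) (u : ℤ → D) : Subsemiring D :=
  Subsemiring.closure (⋃ j ∈ Set.Icc (0 : ℕ) (2 * k), ({u (j:ℤ), (u (j:ℤ))⁻¹} : Set D))

section core

variable (k : ℕ) (u : ℤ → D) (hu : ∀ n : ℤ, u n ≠ 0)

include hu

private lemma Qlem
    (hE : ∀ n : ℤ, n % 2 = 0 →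
      u (n + 2*(k:ℤ) + 1) * u n = u (n + 1) * u (n + 2*(k:ℤ)) + 1)
    (hO : ∀ n : ℤ, n % 2 = 1 →
      u n * u (n + 2*(k:ℤ) + 1) = u (n + 2*(k:ℤ)) * u (n + 1) + 1) :
    ∀ b : ℕ, (b % 2 = 0 → u ((b:ℤ) + 2*(k:ℤ)) = (zel k u + esum u b) * u (b:ℤ))
      ∧ (b % 2 = 1 → u ((b:ℤ) + 2*(k:ℤ)) = u (b:ℤ) * (zel k u + esum u b)) := by
  intro b
  induction b with
  | zero =>
    constructor
    · intro _
      have : zel k u * u 0 = u (2*(k:ℤ)) := by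
        rw [zel, mul_assoc, inv_mul_cancel₀ (hu 0), mul_one]
      simp only [esum, Finset.range_zero, Finset.sum_empty, add_zero, Nat.cast_zero, zero_add]
      rw [this]
    · intro h; omega
  | succ b IH =>
    have hsucc : ((b+1 : ℕ) : ℤ) = (b:ℤ) + 1 := by push_cast; ring
    have hesucc : esum u (b+1) = esum u b + tau u b := Finset.sum_range_succ _ _
    rcases Nat.even_or_odd b with hb | hb
    · have hb2 : b % 2 = 0 := Nat.even_iff.mp hb
      have hIH := IH.1 hb2
      constructor
      · intro h; omega
      · intro _
        rw [hsucc]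
        have htau : tau u b = (u ((b:ℤ) + 1))⁻¹ * (u (b:ℤ))⁻¹ := by
          rw [tau, if_pos hb2]
        apply mul_right_cancel₀ (hu (b:ℤ))
        have h1 := hE (b:ℤ) (by omega)
        calc u ((b:ℤ) + 1 + 2*(k:ℤ)) * u (b:ℤ)
            = u ((b:ℤ) + 2*(k:ℤ) + 1) * u (b:ℤ) := by
              rw [uIdx u (show (b:ℤ) + 1 + 2*(k:ℤ) = (b:ℤ) + 2*(k:ℤ) + 1 by ring)]
          _ = u ((b:ℤ) + 1) * u ((b:ℤ) + 2*(k:ℤ)) + 1 := h1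
          _ = u ((b:ℤ) + 1) * ((zel k u + esum u b) * u (b:ℤ)) + 1 := by rw [hIH]
          _ = u ((b:ℤ) + 1) * (zel k u + esum u b) * u (b:ℤ)
                + u ((b:ℤ)+1) * (u ((b:ℤ)+1))⁻¹ * ((u (b:ℤ))⁻¹ * u (b:ℤ)) := by
              rw [mul_inv_cancel₀ (hu ((b:ℤ)+1)), inv_mul_cancel₀ (hu (b:ℤ))]
              noncomm_ring
          _ = u ((b:ℤ) + 1) * (zel k u + esum u (b+1)) * u (b:ℤ) := by
              rw [hesucc, htau]; noncomm_ring
    · have hb2 : b % 2 = 1 := Nat.odd_iff.mp hb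
      have hIH := IH.2 hb2
      constructor
      · intro _
        rw [hsucc]
        have htau : tau u b = (u (b:ℤ))⁻¹ * (u ((b:ℤ) + 1))⁻¹ := by
          rw [tau, if_neg (by omega)]
        apply mul_left_cancel₀ (hu (b:ℤ))
        have h1 := hO (b:ℤ) (by omega)
        calc u (b:ℤ) * u ((b:ℤ) + 1 + 2*(k:ℤ))
            = u (b:ℤ) * u ((b:ℤ) + 2*(k:ℤ) + 1) := by
              rw [uIdx u (show (b:ℤ) + 1 + 2*(k:ℤ) = (b:ℤ) + 2*(k:ℤ) + 1 by ring)]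
          _ = u ((b:ℤ) + 2*(k:ℤ)) * u ((b:ℤ) + 1) + 1 := h1
          _ = u (b:ℤ) * (zel k u + esum u b) * u ((b:ℤ) + 1) + 1 := by rw [hIH]
          _ = u (b:ℤ) * ((zel k u + esum u b) * u ((b:ℤ)+1))
                + (u (b:ℤ) * (u (b:ℤ))⁻¹) * ((u ((b:ℤ)+1))⁻¹ * u ((b:ℤ)+1)) := by
              rw [mul_inv_cancel₀ (hu (b:ℤ)), inv_mul_cancel₀ (hu ((b:ℤ)+1))]
              noncomm_ring
          _ = u (b:ℤ) * ((zel k u + esum u (b+1)) * u ((b:ℤ) + 1)) := by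
              rw [hesucc, htau]; noncomm_ring
      · intro h; omega

omit hu in
private lemma dia1
    (hE : ∀ n : ℤ, n % 2 = 0 →
      u (n + 2*(k:ℤ) + 1) * u n = u (n + 1) * u (n + 2*(k:ℤ)) + 1) :
    ∀ n : ℤ, n % 2 = 0 →
    u (n + 2*(k:ℤ) + 1) * (u n + u (n + 4*(k:ℤ)))
      = (u (n + 1) + u (n + 4*(k:ℤ) + 1)) * u (n + 2*(k:ℤ)) := by
  intro n hn
  have h1 := hE n hn
  have h2 := hE (n + 2*(k:ℤ)) (by omega)
  rw [uIdx u (show n + 2*(k:ℤ) + 2*(k:ℤ) + 1 = n + 4*(k:ℤ) + 1 by ring)] at h2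
  rw [uIdx u (show n + 2*(k:ℤ) + 2*(k:ℤ) = n + 4*(k:ℤ) by ring)] at h2
  have h2' : u (n + 2*(k:ℤ) + 1) * u (n + 4*(k:ℤ))
      = u (n + 4*(k:ℤ) + 1) * u (n + 2*(k:ℤ)) - 1 := by
    rw [eq_sub_iff_add_eq, ← h2]
  rw [mul_add, add_mul, h1, h2']
  noncomm_ring

omit hu in
private lemma dia2
    (hO : ∀ n : ℤ, n % 2 = 1 →
      u n * u (n + 2*(k:ℤ) + 1) = u (n + 2*(k:ℤ)) * u (n + 1) + 1) :
    ∀ n : ℤ, n % 2 = 0 →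
    u (n + 2*(k:ℤ) + 1) * (u (n + 2) + u (n + 4*(k:ℤ) + 2))
      = (u (n + 1) + u (n + 4*(k:ℤ) + 1)) * u (n + 2*(k:ℤ) + 2) := by
  intro n hn
  have h1 := hO (n + 1) (by omega)
  rw [uIdx u (show n + 1 + 2*(k:ℤ) + 1 = n + 2*(k:ℤ) + 2 by ring),
      uIdx u (show n + 1 + 2*(k:ℤ) = n + 2*(k:ℤ) + 1 by ring),
      uIdx u (show n + 1 + 1 = n + 2 by ring)] at h1
  have h2 := hO (n + 2*(k:ℤ) + 1) (by omega)
  rw [uIdx u (show n + 2*(k:ℤ) + 1 + 2*(k:ℤ) + 1 = n + 4*(k:ℤ) + 2 by ring),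
      uIdx u (show n + 2*(k:ℤ) + 1 + 2*(k:ℤ) = n + 4*(k:ℤ) + 1 by ring),
      uIdx u (show n + 2*(k:ℤ) + 1 + 1 = n + 2*(k:ℤ) + 2 by ring)] at h2
  have h1' : u (n + 2*(k:ℤ) + 1) * u (n + 2)
      = u (n + 1) * u (n + 2*(k:ℤ) + 2) - 1 := by
    rw [eq_sub_iff_add_eq, ← h1]
  rw [mul_add, add_mul, h1', h2]
  noncomm_ring

private lemma consv
    (d1 : ∀ n : ℤ, n % 2 = 0 →
      u (n + 2*(k:ℤ) + 1) * (u n + u (n + 4*(k:ℤ)))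
        = (u (n + 1) + u (n + 4*(k:ℤ) + 1)) * u (n + 2*(k:ℤ)))
    (d2 : ∀ n : ℤ, n % 2 = 0 →
      u (n + 2*(k:ℤ) + 1) * (u (n + 2) + u (n + 4*(k:ℤ) + 2))
        = (u (n + 1) + u (n + 4*(k:ℤ) + 1)) * u (n + 2*(k:ℤ) + 2)) :
    ∀ m : ℕ,
    (m % 2 = 0 → u (m:ℤ) + u ((m:ℤ) + 4*(k:ℤ)) = tcons k u * u ((m:ℤ) + 2*(k:ℤ)))
    ∧ (m % 2 = 1 → u (m:ℤ) + u ((m:ℤ) + 4*(k:ℤ)) = u ((m:ℤ) + 2*(k:ℤ)) * tcons k u) := by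
  intro m
  induction m with
  | zero =>
    refine ⟨fun _ => ?_, fun h => by omega⟩
    simp only [Nat.cast_zero, zero_add]
    rw [tcons, mul_assoc, inv_mul_cancel₀ (hu _), mul_one]
  | succ m IH =>
    have hsucc : ((m+1 : ℕ) : ℤ) = (m:ℤ) + 1 := by push_cast; ring
    rcases Nat.even_or_odd m with hm | hm
    · have hm2 : m % 2 = 0 := Nat.even_iff.mp hm
      have hc := IH.1 hm2
      refine ⟨fun h => by omega, fun _ => ?_⟩
      have d := d1 (m:ℤ) (by omega)
      rw [hc, ← mul_assoc] at d
      have d' := mul_right_cancel₀ (hu ((m:ℤ) + 2*(k:ℤ))) d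
      rw [hsucc,
          uIdx u (show (m:ℤ) + 1 + 4*(k:ℤ) = (m:ℤ) + 4*(k:ℤ) + 1 by ring),
          uIdx u (show (m:ℤ) + 1 + 2*(k:ℤ) = (m:ℤ) + 2*(k:ℤ) + 1 by ring)]
      rw [← d']
    · have hm2 : m % 2 = 1 := Nat.odd_iff.mp hm
      have hc := IH.2 hm2
      refine ⟨fun _ => ?_, fun h => by omega⟩
      have d := d2 ((m:ℤ) - 1) (by omega)
      rw [uIdx u (show (m:ℤ) - 1 + 2*(k:ℤ) + 1 = (m:ℤ) + 2*(k:ℤ) by ring),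
          uIdx u (show (m:ℤ) - 1 + 2 = (m:ℤ) + 1 by ring),
          uIdx u (show (m:ℤ) - 1 + 4*(k:ℤ) + 2 = (m:ℤ) + 1 + 4*(k:ℤ) by ring),
          uIdx u (show (m:ℤ) - 1 + 1 = (m:ℤ) by ring),
          uIdx u (show (m:ℤ) - 1 + 4*(k:ℤ) + 1 = (m:ℤ) + 4*(k:ℤ) by ring),
          uIdx u (show (m:ℤ) - 1 + 2*(k:ℤ) + 2 = (m:ℤ) + 1 + 2*(k:ℤ) by ring)] at d
      rw [hc, mul_assoc] at d
      have d' := mul_left_cancel₀ (hu ((m:ℤ) + 2*(k:ℤ))) d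
      rw [hsucc, d']

omit hu in
private lemma genMem (j : ℕ) (hj : j ≤ 2*k) :
    u (j:ℤ) ∈ GG k u ∧ (u (j:ℤ))⁻¹ ∈ GG k u := by
  constructor <;> refine Subsemiring.subset_closure ?_ <;>
    exact Set.mem_biUnion (show j ∈ Set.Icc 0 (2*k) from ⟨Nat.zero_le _, hj⟩) (by simp)

omit hu in
private lemma genMemZ (m : ℤ) (h0 : 0 ≤ m) (h2k : m ≤ 2*k) :
    u m ∈ GG k u ∧ (u m)⁻¹ ∈ GG k u := by
  have : ((m.toNat : ℕ) : ℤ) = m := Int.toNat_of_nonneg h0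
  rw [← this]
  exact genMem k u m.toNat (by omega)

omit hu in
private lemma zelMem : zel k u ∈ GG k u :=
  mul_mem (genMemZ k u (2*(k:ℤ)) (by omega) (by omega)).1
    (genMemZ k u 0 le_rfl (by omega)).2

omit hu in
private lemma zirMem : zir k u ∈ GG k u :=
  mul_mem (genMemZ k u 0 le_rfl (by omega)).1
    (genMemZ k u (2*(k:ℤ)) (by omega) (by omega)).2

omit hu in
private lemma tauMem (j : ℕ) (hj : j + 1 ≤ 2*k) : tau u j ∈ GG k u := by
  rw [tau]
  split <;>
  exact mul_mem ((genMemZ k u _ (by omega) (by omega)).2)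
    ((genMemZ k u _ (by omega) (by omega)).2)

omit hu in
private lemma esumMem (b : ℕ) (hb : b ≤ 2*k) : esum u b ∈ GG k u := by
  rw [esum]
  exact sum_mem (fun j hj => tauMem k u j (by
    have := Finset.mem_range.mp hj; omega))

private lemma zirzel : zir k u * zel k u = 1 := by
  rw [zir, zel]
  have h : u 0 * (u (2*(k:ℤ)))⁻¹ * (u (2*(k:ℤ)) * (u 0)⁻¹)
      = u 0 * ((u (2*(k:ℤ)))⁻¹ * u (2*(k:ℤ))) * (u 0)⁻¹ := by noncomm_ring
  rw [h, inv_mul_cancel₀ (hu _), mul_one, mul_inv_cancel₀ (hu _)]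

private lemma Tdec
    (hQ : u (2*(k:ℤ) + 2*(k:ℤ)) = (zel k u + esum u (2*k)) * u (2*(k:ℤ))) :
    tcons k u = zir k u + (zel k u + esum u (2*k)) := by
  rw [tcons, uIdx u (show 4*(k:ℤ) = 2*(k:ℤ) + 2*(k:ℤ) by ring), hQ]
  rw [add_mul, mul_assoc, mul_inv_cancel₀ (hu _), mul_one]
  rfl

private lemma main (hk : 1 ≤ k)
    (hQ : ∀ b : ℕ, (b % 2 = 0 → u ((b:ℤ) + 2*(k:ℤ)) = (zel k u + esum u b) * u (b:ℤ))
        ∧ (b % 2 = 1 → u ((b:ℤ) + 2*(k:ℤ)) = u (b:ℤ) * (zel k u + esum u b)))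
    (hC : ∀ m : ℕ, (m % 2 = 0 →
          u (m:ℤ) + u ((m:ℤ) + 4*(k:ℤ)) = tcons k u * u ((m:ℤ) + 2*(k:ℤ)))
        ∧ (m % 2 = 1 →
          u (m:ℤ) + u ((m:ℤ) + 4*(k:ℤ)) = u ((m:ℤ) + 2*(k:ℤ)) * tcons k u))
    (hT : tcons k u = zir k u + (zel k u + esum u (2*k))) :
    ∀ n : ℕ, u (n:ℤ) ∈ GG k u
      ∧ (n % 2 = 0 → u ((n:ℤ) + 2*(k:ℤ)) - zel k u * u (n:ℤ) ∈ GG k u)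
      ∧ (n % 2 = 1 → u ((n:ℤ) + 2*(k:ℤ)) - u (n:ℤ) * zel k u ∈ GG k u) := by
  intro n
  induction n using Nat.strong_induction_on with
  | _ n IH =>
  by_cases hn2k : n < 2*k
  · refine ⟨(genMem k u n (by omega)).1, fun hpar => ?_, fun hpar => ?_⟩
    · rw [(hQ n).1 hpar, add_mul, add_sub_cancel_left]
      exact mul_mem (esumMem k u n (by omega)) (genMem k u n (by omega)).1
    · rw [(hQ n).2 hpar, mul_add, add_sub_cancel_left]
      exact mul_mem (genMem k u n (by omega)).1 (esumMem k u n (by omega))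
  · set m := n - 2*k with hm
    have hmn : m < n := by omega
    have hcast : (n:ℤ) = (m:ℤ) + 2*(k:ℤ) := by push_cast; omega
    obtain ⟨hum, hte, hto⟩ := IH m hmn
    have hun : u (n:ℤ) ∈ GG k u := by
      rcases Nat.even_or_odd m with hp | hp
      · have hp2 : m % 2 = 0 := Nat.even_iff.mp hp
        have e1 : u (n:ℤ) = zel k u * u (m:ℤ)
            + (u ((m:ℤ) + 2*(k:ℤ)) - zel k u * u (m:ℤ)) := by
          rw [uIdx u hcast]; abel
        rw [e1]
        exact add_mem (mul_mem (zelMem k u) hum) (hte hp2)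
      · have hp2 : m % 2 = 1 := Nat.odd_iff.mp hp
        have e1 : u (n:ℤ) = u (m:ℤ) * zel k u
            + (u ((m:ℤ) + 2*(k:ℤ)) - u (m:ℤ) * zel k u) := by
          rw [uIdx u hcast]; abel
        rw [e1]
        exact add_mem (mul_mem hum (zelMem k u)) (hto hp2)
    have hum2k : u ((m:ℤ) + 2*(k:ℤ)) ∈ GG k u := by
      rw [← uIdx u hcast]; exact hun
    refine ⟨hun, fun hpar => ?_, fun hpar => ?_⟩
    · have hp2 : m % 2 = 0 := by omega
      have hc := (hC m).1 hp2
      have h4 : u ((m:ℤ) + 4*(k:ℤ)) = tcons k u * u ((m:ℤ) + 2*(k:ℤ)) - u (m:ℤ) := by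
        rw [eq_sub_iff_add_eq, add_comm, hc]
      have hzp : zir k u * (u ((m:ℤ) + 2*(k:ℤ)) - zel k u * u (m:ℤ))
          = zir k u * u ((m:ℤ) + 2*(k:ℤ)) - u (m:ℤ) := by
        rw [mul_sub, ← mul_assoc, zirzel k u hu, one_mul]
      have final : u ((n:ℤ) + 2*(k:ℤ)) - zel k u * u (n:ℤ)
          = esum u (2*k) * u ((m:ℤ) + 2*(k:ℤ))
            + zir k u * (u ((m:ℤ) + 2*(k:ℤ)) - zel k u * u (m:ℤ)) := by
        rw [uIdx u (show (n:ℤ) + 2*(k:ℤ) = (m:ℤ) + 4*(k:ℤ) by omega),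
            uIdx u hcast, h4, hT, hzp]
        noncomm_ring
      rw [final]
      exact add_mem (mul_mem (esumMem k u (2*k) le_rfl) hum2k)
        (mul_mem (zirMem k u) (hte hp2))
    · have hp2 : m % 2 = 1 := by omega
      have hc := (hC m).2 hp2
      have h4 : u ((m:ℤ) + 4*(k:ℤ)) = u ((m:ℤ) + 2*(k:ℤ)) * tcons k u - u (m:ℤ) := by
        rw [eq_sub_iff_add_eq, add_comm, hc]
      have hzp : (u ((m:ℤ) + 2*(k:ℤ)) - u (m:ℤ) * zel k u) * zir k u
          = u ((m:ℤ) + 2*(k:ℤ)) * zir k u - u (m:ℤ) := by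
        rw [sub_mul, mul_assoc]
        have hzz2 : zel k u * zir k u = 1 := by
          rw [zel, zir]
          have h : u (2*(k:ℤ)) * (u 0)⁻¹ * (u 0 * (u (2*(k:ℤ)))⁻¹)
              = u (2*(k:ℤ)) * ((u 0)⁻¹ * u 0) * (u (2*(k:ℤ)))⁻¹ := by noncomm_ring
          rw [h, inv_mul_cancel₀ (hu _), mul_one, mul_inv_cancel₀ (hu _)]
        rw [hzz2, mul_one]
      have final : u ((n:ℤ) + 2*(k:ℤ)) - u (n:ℤ) * zel k u
          = u ((m:ℤ) + 2*(k:ℤ)) * esum u (2*k)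
            + (u ((m:ℤ) + 2*(k:ℤ)) - u (m:ℤ) * zel k u) * zir k u := by
        rw [uIdx u (show (n:ℤ) + 2*(k:ℤ) = (m:ℤ) + 4*(k:ℤ) by omega),
            uIdx u hcast, h4, hT, hzp]
        noncomm_ring
      rw [final]
      exact add_mem (mul_mem hum2k (esumMem k u (2*k) le_rfl))
        (mul_mem (hto hp2) (zirMem k u))

/-- forward half: all `u n`, `n ≥ 0`, are in the subsemiring of the window `[0, 2k]`. -/
private lemma fwd (hk : 1 ≤ k)
    (hE : ∀ n : ℤ, n % 2 = 0 →
      u (n + 2*(k:ℤ) + 1) * u n = u (n + 1) * u (n + 2*(k:ℤ)) + 1)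
    (hO : ∀ n : ℤ, n % 2 = 1 →
      u n * u (n + 2*(k:ℤ) + 1) = u (n + 2*(k:ℤ)) * u (n + 1) + 1) :
    ∀ n : ℤ, 0 ≤ n →
      u n ∈ Subsemiring.closure
        (⋃ j ∈ Set.Icc (0 : ℕ) (2 * k), ({u (j:ℤ), (u (j:ℤ))⁻¹} : Set D)) := by
  intro n hn
  have hQ := Qlem k u hu hE hO
  have hC := consv k u hu (dia1 k u hE) (dia2 k u hO)
  have hQ2k := (hQ (2*k)).1 (by omega)
  rw [show ((2*k : ℕ):ℤ) = 2*(k:ℤ) by push_cast; ring] at hQ2k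
  have hT := Tdec k u hu hQ2k
  have hmain := main k u hu hk hQ hC hT n.toNat
  have : ((n.toNat : ℕ) : ℤ) = n := Int.toNat_of_nonneg hn
  rw [← this]
  exact hmain.1

end core

open MulOpposite in
private lemma fwd_op (k : ℕ) (u : ℤ → D) (hu : ∀ n : ℤ, u n ≠ 0) (hk : 1 ≤ k)
    (hE' : ∀ n : ℤ, n % 2 = 1 →
      u (n + 2*(k:ℤ) + 1) * u n = u (n + 1) * u (n + 2*(k:ℤ)) + 1)
    (hO' : ∀ n : ℤ, n % 2 = 0 →
      u n * u (n + 2*(k:ℤ) + 1) = u (n + 2*(k:ℤ)) * u (n + 1) + 1) :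
    ∀ n : ℤ, 0 ≤ n →
      u n ∈ Subsemiring.closure
        (⋃ j ∈ Set.Icc (0 : ℕ) (2 * k), ({u (j:ℤ), (u (j:ℤ))⁻¹} : Set D)) := by
  intro n hn
  set v : ℤ → Dᵐᵒᵖ := fun m => op (u m) with hv
  have hvne : ∀ m : ℤ, v m ≠ 0 := by intro m; simp [hv, hu m]
  have hEv : ∀ m : ℤ, m % 2 = 0 →
      v (m + 2*(k:ℤ) + 1) * v m = v (m + 1) * v (m + 2*(k:ℤ)) + 1 := by
    intro m hm
    show op (u (m + 2*(k:ℤ) + 1)) * op (u m)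
        = op (u (m + 1)) * op (u (m + 2*(k:ℤ))) + 1
    calc op (u (m + 2*(k:ℤ) + 1)) * op (u m)
        = op (u m * u (m + 2*(k:ℤ) + 1)) := (op_mul _ _).symm
      _ = op (u (m + 2*(k:ℤ)) * u (m + 1) + 1) := by rw [hO' m hm]
      _ = op (u (m + 1)) * op (u (m + 2*(k:ℤ))) + 1 := by rw [op_add, op_mul, op_one]
  have hOv : ∀ m : ℤ, m % 2 = 1 →
      v m * v (m + 2*(k:ℤ) + 1) = v (m + 2*(k:ℤ)) * v (m + 1) + 1 := by
    intro m hm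
    show op (u m) * op (u (m + 2*(k:ℤ) + 1))
        = op (u (m + 2*(k:ℤ))) * op (u (m + 1)) + 1
    calc op (u m) * op (u (m + 2*(k:ℤ) + 1))
        = op (u (m + 2*(k:ℤ) + 1) * u m) := (op_mul _ _).symm
      _ = op (u (m + 1) * u (m + 2*(k:ℤ)) + 1) := by rw [hE' m hm]
      _ = op (u (m + 2*(k:ℤ))) * op (u (m + 1)) + 1 := by rw [op_add, op_mul, op_one]
  have h := fwd k v hvne hk hEv hOv n hn
  have hpair : ∀ j : ℕ, ({v (j:ℤ), (v (j:ℤ))⁻¹} : Set Dᵐᵒᵖ)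
      = MulOpposite.unop ⁻¹' ({u (j:ℤ), (u (j:ℤ))⁻¹} : Set D) := by
    intro j; ext x
    simp only [hv, Set.mem_insert_iff, Set.mem_singleton_iff, Set.mem_preimage]
    constructor
    · rintro (rfl | rfl) <;> simp
    · rintro (h | h)
      · left; rw [← MulOpposite.op_unop x, h]
      · right; rw [← MulOpposite.op_unop x, h, MulOpposite.op_inv]
  have hset : (⋃ j ∈ Set.Icc (0 : ℕ) (2 * k), ({v (j:ℤ), (v (j:ℤ))⁻¹} : Set Dᵐᵒᵖ))
      = MulOpposite.unop ⁻¹'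
        (⋃ j ∈ Set.Icc (0 : ℕ) (2 * k), ({u (j:ℤ), (u (j:ℤ))⁻¹} : Set D)) := by
    simp only [hpair]
    rw [Set.preimage_iUnion₂]
  rw [hset, ← Subsemiring.op_closure] at h
  simpa [hv] using Subsemiring.mem_op.mp h

section main

variable (k : ℕ) (hk : 1 ≤ k) (u : ℤ → D) (hu : ∀ n : ℤ, u n ≠ 0)
  (h1 : ∀ n : ℤ, u (2 * n + 2 * k + 1) * u (2 * n) = u (2 * n + 1) * u (2 * n + 2 * k) + 1)
  (h2 : ∀ n : ℤ, u (2 * n + 1) * u (2 * n + 2 * k + 2) =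
      u (2 * n + 2 * k + 1) * u (2 * n + 2) + 1)

include hk hu h1 h2 in
private lemma half : ∀ n i : ℤ, i ≤ n →
    u n ∈ Subsemiring.closure
      (⋃ j ∈ Set.Icc (0 : ℕ) (2 * k), ({u (i + j), (u (i + j))⁻¹} : Set D)) := by
  intro n i hin
  have key : ∀ m : ℤ, 0 ≤ m → (fun m => u (i + m)) m ∈ Subsemiring.closure
      (⋃ j ∈ Set.Icc (0 : ℕ) (2 * k),
        ({(fun m => u (i + m)) (j:ℤ), ((fun m => u (i + m)) (j:ℤ))⁻¹} : Set D)) := by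
    set w : ℤ → D := fun m => u (i + m) with hw
    have hwne : ∀ m : ℤ, w m ≠ 0 := fun m => hu (i + m)
    rcases Int.even_or_odd i with hi | hi
    · -- i even : w satisfies (hE, hO)
      have hieven : i % 2 = 0 := Int.even_iff.mp hi
      refine fwd k w hwne hk ?_ ?_
      · intro m hm
        obtain ⟨K, hK⟩ : ∃ K : ℤ, i + m = 2*K := ⟨(i+m)/2, by omega⟩
        have h := h1 K
        rw [uIdx u (show 2*K + 2*(k:ℤ) + 1 = i + (m + 2*(k:ℤ) + 1) by omega),
            uIdx u (show 2*K = i + m by omega),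
            uIdx u (show 2*K + 1 = i + (m + 1) by omega),
            uIdx u (show 2*K + 2*(k:ℤ) = i + (m + 2*(k:ℤ)) by omega)] at h
        exact h
      · intro m hm
        obtain ⟨K, hK⟩ : ∃ K : ℤ, i + m = 2*K + 1 := ⟨(i+m-1)/2, by omega⟩
        have h := h2 K
        rw [uIdx u (show 2*K + 1 = i + m by omega),
            uIdx u (show 2*K + 2*(k:ℤ) + 2 = i + (m + 2*(k:ℤ) + 1) by omega),
            uIdx u (show 2*K + 2*(k:ℤ) + 1 = i + (m + 2*(k:ℤ)) by omega),
            uIdx u (show 2*K + 2 = i + (m + 1) by omega)] at h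
        exact h
    · -- i odd : w satisfies (hE', hO')
      have hiodd : i % 2 = 1 := Int.odd_iff.mp hi
      refine fwd_op k w hwne hk ?_ ?_
      · intro m hm
        obtain ⟨K, hK⟩ : ∃ K : ℤ, i + m = 2*K := ⟨(i+m)/2, by omega⟩
        have h := h1 K
        rw [uIdx u (show 2*K + 2*(k:ℤ) + 1 = i + (m + 2*(k:ℤ) + 1) by omega),
            uIdx u (show 2*K = i + m by omega),
            uIdx u (show 2*K + 1 = i + (m + 1) by omega),
            uIdx u (show 2*K + 2*(k:ℤ) = i + (m + 2*(k:ℤ)) by omega)] at h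
        exact h
      · intro m hm
        obtain ⟨K, hK⟩ : ∃ K : ℤ, i + m = 2*K + 1 := ⟨(i+m-1)/2, by omega⟩
        have h := h2 K
        rw [uIdx u (show 2*K + 1 = i + m by omega),
            uIdx u (show 2*K + 2*(k:ℤ) + 2 = i + (m + 2*(k:ℤ) + 1) by omega),
            uIdx u (show 2*K + 2*(k:ℤ) + 1 = i + (m + 2*(k:ℤ)) by omega),
            uIdx u (show 2*K + 2 = i + (m + 1) by omega)] at h
        exact h
  have h := key (n - i) (by omega)
  simpa [uIdx u (show i + (n - i) = n by ring)] using h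

end main

theorem stmt18_aux {D : Type*} [DivisionRing D] (k : ℕ) (hk : 1 ≤ k)
    (u : ℤ → D) (hu : ∀ n : ℤ, u n ≠ 0)
    (h1 : ∀ n : ℤ, u (2 * n + 2 * k + 1) * u (2 * n) = u (2 * n + 1) * u (2 * n + 2 * k) + 1)
    (h2 : ∀ n : ℤ, u (2 * n + 1) * u (2 * n + 2 * k + 2) =
      u (2 * n + 2 * k + 1) * u (2 * n + 2) + 1) :
    ∀ n i : ℤ,
      u n ∈ Subsemiring.closure
        (⋃ j ∈ Set.Icc (0 : ℕ) (2 * k), ({u (i + j), (u (i + j))⁻¹} : Set D)) := by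
  intro n i
  by_cases hin : i ≤ n
  · exact half k hk u hu h1 h2 n i hin
  · -- reversal
    set v : ℤ → D := fun m => u (2*i + 2*(k:ℤ) - m) with hv
    have hvne : ∀ m : ℤ, v m ≠ 0 := fun m => hu _
    have h1v : ∀ m : ℤ, v (2 * m + 2 * k + 1) * v (2 * m)
        = v (2 * m + 1) * v (2 * m + 2 * k) + 1 := by
      intro m
      have h := h2 (i - m - 1)
      rw [uIdx u (show 2*(i-m-1) + 1 = 2*i + 2*(k:ℤ) - (2*m + 2*(k:ℤ) + 1) by ring),
          uIdx u (show 2*(i-m-1) + 2*(k:ℤ) + 2 = 2*i + 2*(k:ℤ) - (2*m) by ring),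
          uIdx u (show 2*(i-m-1) + 2*(k:ℤ) + 1 = 2*i + 2*(k:ℤ) - (2*m + 1) by ring),
          uIdx u (show 2*(i-m-1) + 2 = 2*i + 2*(k:ℤ) - (2*m + 2*(k:ℤ)) by ring)] at h
      exact h
    have h2v : ∀ m : ℤ, v (2 * m + 1) * v (2 * m + 2 * k + 2)
        = v (2 * m + 2 * k + 1) * v (2 * m + 2) + 1 := by
      intro m
      have h := h1 (i - m - 1)
      rw [uIdx u (show 2*(i-m-1) + 2*(k:ℤ) + 1 = 2*i + 2*(k:ℤ) - (2*m + 1) by ring),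
          uIdx u (show 2*(i-m-1) = 2*i + 2*(k:ℤ) - (2*m + 2*(k:ℤ) + 2) by ring),
          uIdx u (show 2*(i-m-1) + 1 = 2*i + 2*(k:ℤ) - (2*m + 2*(k:ℤ) + 1) by ring),
          uIdx u (show 2*(i-m-1) + 2*(k:ℤ) = 2*i + 2*(k:ℤ) - (2*m + 2) by ring)] at h
      exact h
    have h := half k hk v hvne h1v h2v (2*i + 2*(k:ℤ) - n) i (by omega)
    have hvn : v (2*i + 2*(k:ℤ) - n) = u n :=
      uIdx u (show 2*i + 2*(k:ℤ) - (2*i + 2*(k:ℤ) - n) = n by ring)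
    rw [hvn] at h
    refine Subsemiring.closure_mono ?_ h
    intro x hx
    rw [Set.mem_iUnion₂] at hx ⊢
    obtain ⟨j, hj, hx⟩ := hx
    have hj2 : j ≤ 2*k := hj.2
    refine ⟨2*k - j, ⟨Nat.zero_le _, by omega⟩, ?_⟩
    have hvj : v (i + (j:ℤ)) = u (i + ((2*k - j : ℕ) : ℤ)) :=
      uIdx u (by omega)
    rw [Set.mem_insert_iff, Set.mem_singleton_iff] at hx
    rw [Set.mem_insert_iff, Set.mem_singleton_iff]
    rcases hx with h' | h'
    · left; rw [h', ← hvj]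
    · right; rw [h', ← hvj]


end Stmt18Aux

/-- Theorem 6.2 of Di Francesco–Kedem (Laurent positivity for the noncommutative rank
`2k+1` system): every `u_n` lies in the subsemiring of `D` generated by
`u_i^{±1}, u_{i+1}^{±1}, …, u_{i+2k}^{±1}`, for any initial data `(u_i, …, u_{i+2k})`. -/
theorem stmt18 {D : Type*} [DivisionRing D] (k : ℕ) (hk : 1 ≤ k)
    (u : ℤ → D) (hu : ∀ n : ℤ, u n ≠ 0)
    (h1 : ∀ n : ℤ, u (2 * n + 2 * k + 1) * u (2 * n) = u (2 * n + 1) * u (2 * n + 2 * k) + 1)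
    (h2 : ∀ n : ℤ, u (2 * n + 1) * u (2 * n + 2 * k + 2) =
      u (2 * n + 2 * k + 1) * u (2 * n + 2) + 1) :
    ∀ n i : ℤ,
      u n ∈ Subsemiring.closure
        (⋃ j ∈ Set.Icc (0 : ℕ) (2 * k), ({u (i + j), (u (i + j))⁻¹} : Set D)) :=
  Stmt18Aux.stmt18_aux k hk u hu h1 h2
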